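/- Let (X_η)_{η∈I} be an infinite family of nontrivial real normed spaces. Then the dual of the ℓ_1-sum ℓ_1(X_η) has the weak* 1-ASD2P with respect to the cardinality of ℓ_1(X_η): for every set A of norm-one elements of ℓ_1(X_η) there exist a set B ⊆ S_{ℓ_∞(X_η*)} and x** ∈ S_{(ℓ_∞(X_η*))*} such that B norms A (i.e., for every x ∈ A and every δ > 0 there is x* ∈ B with x*(x) > 1 − δ) and x**(x*) = 1 for every x* ∈ B. -/

import Mathlib

open Filter Topology

section Aux

variable {ι : Type*} (X : ι → Type*)
    [∀ i, NormedAddCommGroup (X i)] [∀ i, NormedSpace ℝ (X i)]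

lemma auxNormEq (x : lp X 1) : ‖x‖ = ∑' i, ‖x i‖ := by
  have := lp.norm_eq_tsum_rpow (p := 1) (by norm_num) x
  simpa using this

lemma auxSummable (x : lp X 1) : Summable fun i => ‖x i‖ := by
  have := (lp.memℓp x).summable (p := 1) (by norm_num)
  simpa using this

lemma auxSummableApply (f : ∀ i, X i →L[ℝ] ℝ) (hf : ∀ i, ‖f i‖ ≤ 1) (x : lp X 1) :
    Summable fun i => f i (x i) := by
  refine Summable.of_norm (.of_nonneg_of_le (fun i => norm_nonneg _) (fun i => ?_)
    (auxSummable X x))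
  calc ‖f i (x i)‖ ≤ ‖f i‖ * ‖x i‖ := (f i).le_opNorm (x i)
    _ ≤ 1 * ‖x i‖ := by gcongr; exact hf i
    _ = ‖x i‖ := one_mul _

lemma auxTsumNormLe (f : ∀ i, X i →L[ℝ] ℝ) (hf : ∀ i, ‖f i‖ ≤ 1) (x : lp X 1) :
    ‖∑' i, f i (x i)‖ ≤ 1 * ‖x‖ := by
  rw [one_mul, auxNormEq]
  refine le_trans (norm_tsum_le_tsum_norm ?_) (Summable.tsum_le_tsum (fun i => ?_) ?_ (auxSummable X x))
  · exact (auxSummableApply X f hf x).norm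
  · calc ‖f i (x i)‖ ≤ ‖f i‖ * ‖x i‖ := (f i).le_opNorm (x i)
      _ ≤ 1 * ‖x i‖ := by gcongr; exact hf i
      _ = ‖x i‖ := one_mul _
  · exact (auxSummableApply X f hf x).norm

noncomputable def pairLp (f : ∀ i, X i →L[ℝ] ℝ) (hf : ∀ i, ‖f i‖ ≤ 1) : lp X 1 →L[ℝ] ℝ :=
  LinearMap.mkContinuous
    { toFun := fun x => ∑' i, f i (x i)
      map_add' := fun x y => by
        have h1 := auxSummableApply X f hf x
        have h2 := auxSummableApply X f hf y
        simp only [lp.coeFn_add, Pi.add_apply, map_add]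
        exact Summable.tsum_add h1 h2
      map_smul' := fun c x => by
        simp only [lp.coeFn_smul, Pi.smul_apply, map_smul, smul_eq_mul, RingHom.id_apply]
        exact tsum_mul_left }
    1 (auxTsumNormLe X f hf)

lemma pairLp_apply (f : ∀ i, X i →L[ℝ] ℝ) (hf : ∀ i, ‖f i‖ ≤ 1) (x : lp X 1) :
    pairLp X f hf x = ∑' i, f i (x i) := rfl

lemma pairLp_norm_le (f : ∀ i, X i →L[ℝ] ℝ) (hf : ∀ i, ‖f i‖ ≤ 1) :
    ‖pairLp X f hf‖ ≤ 1 :=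
  LinearMap.mkContinuous_norm_le _ zero_le_one _

lemma pairLp_single [DecidableEq ι] (f : ∀ i, X i →L[ℝ] ℝ) (hf : ∀ i, ‖f i‖ ≤ 1)
    (j : ι) (v : X j) : pairLp X f hf (lp.single 1 j v) = f j v := by
  rw [pairLp_apply]
  rw [tsum_eq_single j]
  · rw [lp.single_apply_self]
  · intro i hij
    rw [lp.single_apply_ne _ _ _ hij, map_zero]

lemma auxNormGeOne (h : lp X 1 →L[ℝ] ℝ) (u : lp X 1) (hu : ‖u‖ = 1) (h1 : h u = 1) :
    1 ≤ ‖h‖ := by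
  have := h.le_opNorm u
  rw [hu, h1, mul_one] at this
  simpa using this

end Aux

theorem stmt_10 {ι : Type*} [Infinite ι] (X : ι → Type*)
    [∀ i, NormedAddCommGroup (X i)] [∀ i, NormedSpace ℝ (X i)]
    [∀ i, Nontrivial (X i)]
    (A : Set (lp X 1)) (hA : ∀ x ∈ A, ‖x‖ = 1) :
    ∃ (B : Set (lp X 1 →L[ℝ] ℝ)) (F : (lp X 1 →L[ℝ] ℝ) →L[ℝ] ℝ),
      (∀ f ∈ B, ‖f‖ = 1) ∧ ‖F‖ = 1 ∧
      (∀ x ∈ A, ∀ δ > (0 : ℝ), ∃ f ∈ B, f x > 1 - δ) ∧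
      (∀ f ∈ B, F f = 1) := by
  classical
  -- unit vectors
  have he : ∀ i, ∃ v : X i, ‖v‖ = 1 := fun i => exists_norm_eq (X i) zero_le_one
  choose e he using he
  -- norming functionals for the unit vectors
  have hg : ∀ i, ∃ g : X i →L[ℝ] ℝ, ‖g‖ = 1 ∧ g (e i) = 1 := by
    intro i
    obtain ⟨g, hg1, hg2⟩ := exists_dual_vector ℝ (e i)
      (by intro h; have := he i; rw [h] at this; simpa using this)
    refine ⟨g, hg1, ?_⟩
    rw [hg2, he i]; norm_num
  choose g hg1 hg2 using hg
  -- unit sphere singles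
  have hsingle : ∀ i, ‖(lp.single 1 i (e i) : lp X 1)‖ = 1 := by
    intro i
    have := lp.norm_single (E := X) (p := 1) (by norm_num) i (e i)
    rw [this, he i]
  -- the set B
  set B : Set (lp X 1 →L[ℝ] ℝ) :=
    {h | ‖h‖ = 1 ∧ ({i | h (lp.single 1 i (e i)) ≠ 1}).Finite} with hB
  -- ultrafilter
  haveI : (Filter.cofinite : Filter ι).NeBot := Filter.cofinite_neBot
  set U : Ultrafilter ι := Ultrafilter.of Filter.cofinite with hUdef
  have hU : (U : Filter ι) ≤ Filter.cofinite := Ultrafilter.of_le _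
  set φ : (lp X 1 →L[ℝ] ℝ) → ι → ℝ := fun h i => h (lp.single 1 i (e i)) with hφ
  have hφbd : ∀ h i, |φ h i| ≤ ‖h‖ := by
    intro h i
    have := h.le_opNorm (lp.single 1 i (e i))
    rw [hsingle i, mul_one] at this
    simpa [Real.norm_eq_abs] using this
  have key : ∀ h, ∃ a, Tendsto (φ h) (U : Filter ι) (𝓝 a) ∧ |a| ≤ ‖h‖ := by
    intro h
    have hmem : (U.map (φ h) : Filter ℝ) ≤ 𝓟 (Set.Icc (-‖h‖) ‖h‖) := by
      rw [Filter.le_principal_iff]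
      refine Filter.mem_map.2 (Filter.univ_mem' fun i => ?_)
      exact abs_le.1 (hφbd h i)
    obtain ⟨a, ha, hle⟩ := isCompact_Icc.ultrafilter_le_nhds (U.map (φ h)) hmem
    exact ⟨a, hle, abs_le.2 ha⟩
  choose F0 hF0 habs using key
  -- F0 is linear
  have hadd : ∀ h₁ h₂, F0 (h₁ + h₂) = F0 h₁ + F0 h₂ := by
    intro h₁ h₂
    refine tendsto_nhds_unique (hF0 (h₁ + h₂)) ?_
    have : φ (h₁ + h₂) = fun i => φ h₁ i + φ h₂ i := by
      funext i; simp [hφ]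
    rw [this]
    exact (hF0 h₁).add (hF0 h₂)
  have hsmul : ∀ (c : ℝ) h, F0 (c • h) = c * F0 h := by
    intro c h
    refine tendsto_nhds_unique (hF0 (c • h)) ?_
    have : φ (c • h) = fun i => c * φ h i := by
      funext i; simp [hφ]
    rw [this]
    exact (hF0 h).const_mul c
  set F : (lp X 1 →L[ℝ] ℝ) →L[ℝ] ℝ :=
    LinearMap.mkContinuous
      { toFun := F0
        map_add' := hadd
        map_smul' := fun c h => by simpa using hsmul c h }
      1 (fun h => by simpa [Real.norm_eq_abs] using habs h) with hF
  have hFapp : ∀ h, F h = F0 h := fun h => rfl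
  -- F f = 1 on B
  have hFone : ∀ h ∈ B, F h = 1 := by
    intro h hh
    rw [hFapp]
    refine tendsto_nhds_unique (hF0 h) ?_
    have hev : φ h =ᶠ[(U : Filter ι)] (fun _ => 1) := by
      apply hU
      exact hh.2
    exact Tendsto.congr' hev.symm tendsto_const_nhds
  -- the "tail" functional g0
  set g0 : lp X 1 →L[ℝ] ℝ := pairLp X g (fun i => le_of_eq (hg1 i)) with hg0
  have hg0single : ∀ i, g0 (lp.single 1 i (e i)) = 1 := by
    intro i
    rw [hg0, pairLp_single, hg2]
  have hg0norm : ‖g0‖ = 1 :=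
    le_antisymm (pairLp_norm_le X g _)
      (auxNormGeOne X g0 _ (hsingle (Classical.arbitrary ι)) (hg0single _))
  have hg0B : g0 ∈ B := by
    refine ⟨hg0norm, ?_⟩
    convert Set.finite_empty
    ext i
    simp [hg0single i]
  -- norms of F
  have hFnorm : ‖F‖ = 1 := by
    refine le_antisymm (LinearMap.mkContinuous_norm_le _ zero_le_one _) ?_
    have h1 : F g0 = 1 := hFone g0 hg0B
    have := F.le_opNorm g0
    rw [hg0norm, h1, mul_one] at this
    simpa using this
  refine ⟨B, F, fun f hf => hf.1, hFnorm, ?_, hFone⟩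
  -- norming property
  intro x hx δ hδ
  have hxnorm : ∑' i, ‖x i‖ = 1 := by rw [← auxNormEq]; exact hA x hx
  have hs : Summable fun i => ‖x i‖ := auxSummable X x
  -- pick finite set capturing most of the mass
  obtain ⟨S, hS⟩ : ∃ S : Finset ι, (∑' i : {j // j ∉ S}, ‖x i‖) < δ / 2 := by
    have := (tendsto_order.1 (tendsto_tsum_compl_atTop_zero fun i => ‖x i‖)).2 _
      (by linarith : (0:ℝ) < δ / 2)
    exact this.exists
  -- norming functionals for x on S
  have hfx : ∀ i, ∃ f : X i →L[ℝ] ℝ, ‖f‖ = 1 ∧ f (x i) = ‖x i‖ := by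
    intro i
    obtain ⟨f, hf1, hf2⟩ := exists_dual_vector' ℝ (x i)
    exact ⟨f, hf1, by exact_mod_cast hf2⟩
  choose fx hfx1 hfx2 using hfx
  set fam : ∀ i, X i →L[ℝ] ℝ := fun i => if i ∈ S then fx i else g i with hfam
  have hfamle : ∀ i, ‖fam i‖ ≤ 1 := by
    intro i
    by_cases hi : i ∈ S
    · simp [hfam, hi, hfx1 i]
    · simp [hfam, hi, hg1 i]
  set h : lp X 1 →L[ℝ] ℝ := pairLp X fam hfamle with hh
  have hhsingle : ∀ i ∉ S, h (lp.single 1 i (e i)) = 1 := by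
    intro i hi
    rw [hh, pairLp_single]
    simp [hfam, hi, hg2]
  obtain ⟨i₀, hi₀⟩ := Infinite.exists_notMem_finset S
  have hhnorm : ‖h‖ = 1 :=
    le_antisymm (pairLp_norm_le X fam hfamle)
      (auxNormGeOne X h _ (hsingle i₀) (hhsingle i₀ hi₀))
  have hhB : h ∈ B := by
    refine ⟨hhnorm, Set.Finite.subset S.finite_toSet ?_⟩
    intro i hi
    by_contra hiS
    exact hi (hhsingle i hiS)
  refine ⟨h, hhB, ?_⟩
  -- estimate h x
  have hsum2 : Summable fun i => fam i (x i) := auxSummableApply X fam hfamle x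
  have hxapp : h x = ∑' i, fam i (x i) := rfl
  set d : ι → ℝ := fun i => ‖x i‖ - fam i (x i) with hd
  have hdsum : Summable d := hs.sub hsum2
  have hd0 : ∀ i ∈ S, d i = 0 := by
    intro i hi
    simp [hd, hfam, hi, hfx2]
  have hdle : ∀ i, d i ≤ 2 * ‖x i‖ := by
    intro i
    have h1 : |fam i (x i)| ≤ ‖x i‖ := by
      have := (fam i).le_opNorm (x i)
      calc |fam i (x i)| ≤ ‖fam i‖ * ‖x i‖ := this
        _ ≤ 1 * ‖x i‖ := by gcongr; exact hfamle i
        _ = ‖x i‖ := one_mul _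
    have := (abs_le.1 h1).1
    simp only [hd]
    linarith
  have hdtsum : ∑' i, d i = ∑' i : {j // j ∉ S}, d i := by
    refine (tsum_subtype_eq_of_support_subset ?_).symm
    intro i hi
    simp only [Function.mem_support] at hi
    by_contra hiS
    change ¬ (i ∉ S) at hiS
    exact hi (hd0 i (not_not.1 hiS))
  have hdbound : ∑' i : {j // j ∉ S}, d i ≤ 2 * ∑' i : {j // j ∉ S}, ‖x i‖ := by
    rw [← tsum_mul_left]
    refine Summable.tsum_le_tsum (fun i => hdle i) (hdsum.subtype _) ?_
    exact (hs.mul_left 2).subtype _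
  have hsplit : ∑' i, d i = 1 - h x := by
    rw [hd] at hdsum ⊢
    rw [Summable.tsum_sub hs hsum2, hxnorm, hxapp]
  have : 1 - h x < δ := by
    rw [← hsplit]
    calc ∑' i, d i = ∑' i : {j // j ∉ S}, d i := hdtsum
      _ ≤ 2 * ∑' i : {j // j ∉ S}, ‖x i‖ := hdbound
      _ < 2 * (δ / 2) := by
          have hpos : (0:ℝ) ≤ ∑' i : {j // j ∉ S}, ‖x i‖ := tsum_nonneg fun _ => norm_nonneg _
          linarith [hS]
      _ = δ := by ring
  linarith
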